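/- Let p be a prime, let A ∈ ℤ with gcd(A, p) = 1, and let k be a positive integer divisible by 3. Then S(A x³, p^k) = p^{2k/3}. -/

import Mathlib

noncomputable section

namespace CubicAppendix

open Finset

/-- `S(Ax³, c) := ∑_{j=0}^{c−1} exp(2πi A j³ / c)`. -/
def S (A : ℤ) (c : ℕ) : ℂ :=
  ∑ j ∈ Finset.range c,
    Complex.exp (2 * Real.pi * Complex.I * (A : ℂ) * (j : ℂ) ^ 3 / (c : ℂ))

noncomputable def e (x : ℂ) : ℂ := Complex.exp (2 * Real.pi * Complex.I * x)

lemma e_add (x y : ℂ) : e (x + y) = e x * e y := by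
  simp [e, mul_add, Complex.exp_add]

lemma e_int (n : ℤ) : e n = 1 := by
  unfold e
  rw [show (2:ℂ)*Real.pi*Complex.I*n = n*(2*Real.pi*Complex.I) by ring,
    Complex.exp_int_mul_two_pi_mul_I]

lemma e_nat_mul (x : ℂ) (n : ℕ) : e (n * x) = e x ^ n := by
  unfold e
  rw [show (2:ℂ)*Real.pi*Complex.I*(n*x) = n*(2*Real.pi*Complex.I*x) by ring,
    Complex.exp_nat_mul]

lemma e_cong {c : ℕ} (hc : c ≠ 0) {x y : ℤ} (h : (c:ℤ) ∣ (x - y)) :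
    e ((x:ℂ) / c) = e ((y:ℂ) / c) := by
  obtain ⟨t, ht⟩ := h
  have hx : x = y + c * t := by linarith [ht]
  have hc' : (c:ℂ) ≠ 0 := Nat.cast_ne_zero.mpr hc
  subst hx
  have : ((y + (c:ℤ) * t : ℤ) : ℂ) / c = (y:ℂ)/c + t := by push_cast; field_simp
  rw [this, e_add, e_int, mul_one]

lemma sum_e (n : ℕ) (hn : 0 < n) (c : ℤ) :
    ∑ v ∈ Finset.range n, e ((c:ℂ) * v / n) = if (n:ℤ) ∣ c then (n:ℂ) else 0 := by
  have hn' : (n:ℂ) ≠ 0 := Nat.cast_ne_zero.mpr hn.ne'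
  have hterm : ∀ v : ℕ, e ((c:ℂ) * v / n) = e ((c:ℂ) / n) ^ v := by
    intro v
    rw [show (c:ℂ) * v / n = v * ((c:ℂ) / n) by ring, e_nat_mul]
  simp only [hterm]
  by_cases hd : (n:ℤ) ∣ c
  · rw [if_pos hd]
    obtain ⟨m, hm⟩ := hd
    have hcn : (c:ℂ)/n = (m:ℤ) := by rw [hm]; push_cast; field_simp
    have h1 : e ((c:ℂ)/n) = 1 := by rw [hcn]; exact e_int m
    simp [h1]
  · rw [if_neg hd]
    have hne : e ((c:ℂ)/n) ≠ 1 := by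
      intro h
      unfold e at h
      rw [Complex.exp_eq_one_iff] at h
      obtain ⟨m, hm⟩ := h
      have h2 : (2:ℂ)*Real.pi*Complex.I ≠ 0 := by
        simp [Real.pi_ne_zero, Complex.I_ne_zero, Complex.ofReal_ne_zero]
      have hcc : (c:ℂ) = n * m := by
        field_simp at hm
        apply mul_left_cancel₀ h2
        linear_combination (2*(Real.pi:ℂ)*Complex.I) * hm
      exact hd ⟨m, by exact_mod_cast hcc⟩
    have hpow : e ((c:ℂ)/n) ^ n = 1 := by
      rw [← e_nat_mul, show (n:ℂ) * ((c:ℂ)/n) = c by field_simp, e_int]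
    rw [geom_sum_eq hne, hpow]
    simp

lemma sum_range_mul' {M : Type*} [AddCommMonoid M] (f : ℕ → M) (a b : ℕ) (ha : 0 < a) :
    ∑ j ∈ Finset.range (a * b), f j
      = ∑ u ∈ Finset.range a, ∑ v ∈ Finset.range b, f (u + a * v) := by
  rw [← Finset.sum_product']
  apply Finset.sum_nbij' (i := fun j => (j % a, j / a)) (j := fun x => x.1 + a * x.2)
  · intro j hj
    simp only [Finset.mem_range] at hj
    simp only [Finset.mem_product, Finset.mem_range]
    exact ⟨Nat.mod_lt _ ha, Nat.div_lt_of_lt_mul hj⟩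
  · intro x hx
    simp only [Finset.mem_product, Finset.mem_range] at hx
    simp only [Finset.mem_range]
    calc x.1 + a * x.2 < a + a * x.2 := by omega
    _ = a * (x.2 + 1) := by ring
    _ ≤ a * b := Nat.mul_le_mul_left a (by omega)
  · intro j hj
    exact (Nat.mod_add_div j a)
  · intro x hx
    simp only [Finset.mem_product, Finset.mem_range] at hx
    ext
    · simp [Nat.add_mul_mod_self_left, Nat.mod_eq_of_lt hx.1]
    · simp [Nat.add_mul_div_left _ _ ha, Nat.div_eq_of_lt hx.1]
  · intro j hj
    congr 1
    exact (Nat.mod_add_div j a).symm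

lemma sum_filter_dvd' {M : Type*} [AddCommMonoid M] (p n : ℕ) (hp : 0 < p) (g : ℕ → M) :
    ∑ u ∈ Finset.range (p * n), (if p ∣ u then g u else 0) = ∑ w ∈ Finset.range n, g (p * w) := by
  rw [sum_range_mul' _ p n hp]
  rw [Finset.sum_eq_single_of_mem 0 (Finset.mem_range.mpr hp)]
  · apply Finset.sum_congr rfl
    intro v _
    rw [if_pos ⟨v, by ring⟩]
    congr 1
    omega
  · intro u hu hu0
    apply Finset.sum_eq_zero
    intro v _
    rw [if_neg]
    intro hdvd
    have h1 : p ∣ u := (Nat.dvd_add_right (⟨v, rfl⟩ : p ∣ p*v)).mp (by rwa [add_comm] at hdvd)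
    exact hu0 (Nat.eq_zero_of_dvd_of_lt h1 (Finset.mem_range.mp hu))

lemma S_apply (A : ℤ) (c : ℕ) :
    S A c = ∑ j ∈ Finset.range c, e (((A * (j:ℤ)^3 : ℤ) : ℂ) / c) := by
  unfold S e
  apply Finset.sum_congr rfl
  intro j _
  congr 1
  push_cast
  ring

lemma period (A : ℤ) (n q : ℕ) (hn : 0 < n) :
    ∑ w ∈ Finset.range (n * q), e (((A * (w:ℤ)^3 : ℤ):ℂ) / n)
      = q * ∑ r ∈ Finset.range n, e (((A * (r:ℤ)^3 : ℤ):ℂ) / n) := by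
  rw [sum_range_mul' (fun w => e (((A * (w:ℤ)^3 : ℤ):ℂ) / n)) n q hn]
  have key : ∀ r ∈ Finset.range n, ∀ s ∈ Finset.range q,
      e (((A * ((r + n * s : ℕ):ℤ)^3 : ℤ):ℂ) / n) = e (((A * (r:ℤ)^3 : ℤ):ℂ) / n) := by
    intro r _ s _
    apply e_cong hn.ne'
    push_cast
    exact ⟨A*(3*(r:ℤ)^2*s + 3*r*n*s^2 + n^2*s^3), by ring⟩
  rw [Finset.sum_congr rfl (fun r hr => Finset.sum_congr rfl (fun s hs => key r hr s hs))]
  simp [Finset.sum_const, mul_comm]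
  rw [Finset.mul_sum]

lemma dvd_A_sq (p : ℕ) (hp : p.Prime) (A : ℤ) (hA : Int.gcd A p = 1) (u : ℕ) :
    (p:ℤ) ∣ A * (u:ℤ)^2 ↔ p ∣ u := by
  have hpp : Prime (p:ℤ) := Nat.prime_iff_prime_int.mp hp
  constructor
  · intro h
    rcases hpp.dvd_mul.mp h with h1 | h2
    · exfalso
      have h5 : (p:ℤ) ∣ (Int.gcd A p : ℤ) := Int.dvd_coe_gcd h1 dvd_rfl
      rw [hA] at h5
      rcases Int.isUnit_iff.mp (isUnit_of_dvd_one h5) with h6 | h6 <;>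
        · have := hp.two_le; omega
    · have h3 := hpp.dvd_of_dvd_pow h2
      exact_mod_cast h3
  · intro h
    exact Dvd.dvd.mul_left (dvd_pow (Int.natCast_dvd_natCast.mpr h) two_ne_zero) A

lemma rec_ne_three (p : ℕ) (hp : p.Prime) (hp3 : p ≠ 3) (A : ℤ) (hA : Int.gcd A p = 1)
    (k : ℕ) (hk : 3 ≤ k) : S A (p ^ k) = (p:ℂ)^2 * S A (p ^ (k - 3)) := by
  have hp0 : 0 < p := hp.pos
  have hpc : (p:ℂ) ≠ 0 := Nat.cast_ne_zero.mpr hp0.ne'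
  have hpk0 : (p:ℕ)^k ≠ 0 := pow_ne_zero _ hp0.ne'
  have hkeq : p ^ k = p ^ (k-1) * p := by rw [← pow_succ]; congr 1; omega
  have hpp : Prime (p:ℤ) := Nat.prime_iff_prime_int.mp hp
  -- step 1 : reindex
  rw [S_apply]
  rw [show Finset.range (p^k) = Finset.range (p^(k-1) * p) by rw [← hkeq]]
  rw [sum_range_mul' (fun j => e (((A * (j:ℤ)^3 : ℤ) : ℂ) / (p^k : ℕ))) _ _
    (pow_pos hp0 _)]
  -- step 2 : per-term splitting
  have key : ∀ u ∈ Finset.range (p^(k-1)), ∀ v ∈ Finset.range p,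
      e (((A * ((u + p^(k-1) * v : ℕ):ℤ)^3 : ℤ):ℂ) / ((p^k : ℕ):ℂ))
        = e (((A * (u:ℤ)^3 : ℤ):ℂ) / ((p^k : ℕ):ℂ)) * e (((3*A*(u:ℤ)^2 : ℤ):ℂ) * v / (p:ℂ)) := by
    intro u _ v _
    have step1 : e (((A * ((u + p^(k-1) * v : ℕ):ℤ)^3 : ℤ):ℂ) / ((p^k : ℕ):ℂ))
        = e (((A * (u:ℤ)^3 + 3*A*(u:ℤ)^2*v*(p:ℤ)^(k-1) : ℤ):ℂ) / ((p^k : ℕ):ℂ)) := by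
      apply e_cong hpk0
      have hd1 : ((p:ℤ)^k) ∣ (p:ℤ)^(k-1) * (p:ℤ)^(k-1) := by
        rw [← pow_add]; exact pow_dvd_pow _ (by omega)
      have hident : A * ((u:ℤ) + (p:ℤ)^(k-1) * v)^3
          - (A * (u:ℤ)^3 + 3*A*(u:ℤ)^2*v*(p:ℤ)^(k-1))
          = (p:ℤ)^(k-1) * (p:ℤ)^(k-1) * (3*A*u*v^2 + A*(p:ℤ)^(k-1)*v^3) := by ring
      push_cast
      push_cast at hident
      rw [hident]
      exact Dvd.dvd.mul_right hd1 _
    rw [step1]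
    have split : (((A * (u:ℤ)^3 + 3*A*(u:ℤ)^2*v*(p:ℤ)^(k-1) : ℤ):ℂ) / ((p^k : ℕ):ℂ))
        = ((A * (u:ℤ)^3 : ℤ):ℂ) / ((p^k : ℕ):ℂ) + ((3*A*(u:ℤ)^2 : ℤ):ℂ) * v / (p:ℂ) := by
      have hck : ((p:ℂ))^k = (p:ℂ)^(k-1) * p := by rw [← pow_succ]; congr 1; omega
      have hpc1 : ((p:ℂ))^(k-1) ≠ 0 := pow_ne_zero _ hpc
      push_cast
      rw [hck]
      field_simp
    rw [split, e_add]
  rw [Finset.sum_congr rfl (fun u hu => Finset.sum_congr rfl (fun v hv => key u hu v hv))]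
  -- step 3 : inner sum
  have inner : ∀ u : ℕ,
      ∑ v ∈ Finset.range p, e (((A * (u:ℤ)^3 : ℤ):ℂ) / ((p^k : ℕ):ℂ)) * e (((3*A*(u:ℤ)^2 : ℤ):ℂ) * v / (p:ℂ))
        = e (((A * (u:ℤ)^3 : ℤ):ℂ) / ((p^k : ℕ):ℂ)) * (if p ∣ u then (p:ℂ) else 0) := by
    intro u
    rw [← Finset.mul_sum, sum_e p hp0 (3*A*(u:ℤ)^2)]
    congr 1
    have h3 : ¬ (p:ℤ) ∣ 3 := by
      intro h
      have : p ∣ 3 := by exact_mod_cast h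
      exact hp3 ((Nat.prime_dvd_prime_iff_eq hp Nat.prime_three).mp this)
    have : ((p:ℤ) ∣ 3*A*(u:ℤ)^2) ↔ p ∣ u := by
      rw [show (3:ℤ)*A*(u:ℤ)^2 = 3*(A*(u:ℤ)^2) by ring, hpp.dvd_mul]
      simp [h3, dvd_A_sq p hp A hA u]
    rw [if_congr this rfl rfl]
  rw [Finset.sum_congr rfl (fun u _ => inner u)]
  -- step 4 : filter to multiples of p
  simp only [mul_ite, mul_zero]
  have hk1 : p^(k-1) = p * p^(k-2) := by rw [← pow_succ']; congr 1; omega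
  rw [show Finset.range (p^(k-1)) = Finset.range (p * p^(k-2)) by rw [← hk1]]
  rw [sum_filter_dvd' p (p^(k-2)) hp0
    (fun u => e (((A * (u:ℤ)^3 : ℤ):ℂ) / ((p^k : ℕ):ℂ)) * (p:ℂ))]
  -- step 5 : simplify terms
  have term : ∀ w : ℕ, e (((A * ((p*w : ℕ):ℤ)^3 : ℤ):ℂ) / ((p^k : ℕ):ℂ))
      = e (((A * (w:ℤ)^3 : ℤ):ℂ) / ((p^(k-3) : ℕ):ℂ)) := by
    intro w
    congr 1
    have hck : ((p:ℂ))^k = (p:ℂ)^(k-3) * p^3 := by rw [← pow_add]; congr 1; omega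
    have hpc1 : ((p:ℂ))^(k-3) ≠ 0 := pow_ne_zero _ hpc
    push_cast
    rw [hck]
    field_simp
  simp only [term]
  -- step 6 : period
  have hk2 : p^(k-2) = p^(k-3) * p := by rw [← pow_succ]; congr 1; omega
  rw [← Finset.sum_mul]
  rw [show Finset.range (p^(k-2)) = Finset.range (p^(k-3) * p) by rw [← hk2]]
  rw [period A (p^(k-3)) p (pow_pos hp0 _), S_apply]
  push_cast
  ring


lemma rec_three (A : ℤ) (hA : Int.gcd A 3 = 1) (k : ℕ) (hk : 3 ≤ k) :
    S A (3 ^ k) = (3:ℂ)^2 * S A (3 ^ (k - 3)) := by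
  have hpk0 : (3:ℕ)^k ≠ 0 := pow_ne_zero _ (by norm_num)
  have hpc : (3:ℂ) ≠ 0 := by norm_num
  have hkeq : (3:ℕ) ^ k = 3 ^ (k-2) * 9 := by
    rw [show (9:ℕ) = 3^2 by norm_num, ← pow_add]; congr 1; omega
  rw [S_apply]
  rw [show Finset.range (3^k) = Finset.range (3^(k-2) * 9) by rw [← hkeq]]
  rw [sum_range_mul' (fun j => e (((A * (j:ℤ)^3 : ℤ) : ℂ) / ((3^k : ℕ):ℂ))) _ _
    (pow_pos (by norm_num) _)]
  have key : ∀ u ∈ Finset.range (3^(k-2)), ∀ v ∈ Finset.range 9,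
      e (((A * ((u + 3^(k-2) * v : ℕ):ℤ)^3 : ℤ):ℂ) / ((3^k : ℕ):ℂ))
        = e (((A * (u:ℤ)^3 : ℤ):ℂ) / ((3^k : ℕ):ℂ)) * e (((A*(u:ℤ)^2 : ℤ):ℂ) * v / (3:ℂ)) := by
    intro u _ v _
    have step1 : e (((A * ((u + 3^(k-2) * v : ℕ):ℤ)^3 : ℤ):ℂ) / ((3^k : ℕ):ℂ))
        = e (((A * (u:ℤ)^3 + A*(u:ℤ)^2*v*(3:ℤ)^(k-1) : ℤ):ℂ) / ((3^k : ℕ):ℂ)) := by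
      apply e_cong hpk0
      have hd1 : ((3:ℤ)^k) ∣ 3 * ((3:ℤ)^(k-2) * (3:ℤ)^(k-2)) := by
        rw [show (3:ℤ) * ((3:ℤ)^(k-2) * (3:ℤ)^(k-2)) = 3^(1+((k-2)+(k-2))) by
          rw [pow_add, pow_add, pow_one]]
        exact pow_dvd_pow _ (by omega)
      have hd2 : ((3:ℤ)^k) ∣ (3:ℤ)^(k-2) * (3:ℤ)^(k-2) * (3:ℤ)^(k-2) := by
        rw [← pow_add, ← pow_add]
        exact pow_dvd_pow _ (by omega)
      have h31 : (3:ℤ)^(k-1) = 3 * ((3:ℤ)^(k-2)) := by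
        rw [← pow_succ']; congr 1; omega
      have hident : A * ((u:ℤ) + (3:ℤ)^(k-2) * v)^3
          - (A * (u:ℤ)^3 + A*(u:ℤ)^2*v*(3:ℤ)^(k-1))
          = 3 * ((3:ℤ)^(k-2) * (3:ℤ)^(k-2)) * (A*u*v^2)
            + (3:ℤ)^(k-2) * (3:ℤ)^(k-2) * (3:ℤ)^(k-2) * (A*v^3) := by
        rw [h31]; ring
      push_cast
      push_cast at hident
      rw [hident]
      exact dvd_add (Dvd.dvd.mul_right hd1 _) (Dvd.dvd.mul_right hd2 _)
    rw [step1]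
    have split : (((A * (u:ℤ)^3 + A*(u:ℤ)^2*v*(3:ℤ)^(k-1) : ℤ):ℂ) / ((3^k : ℕ):ℂ))
        = ((A * (u:ℤ)^3 : ℤ):ℂ) / ((3^k : ℕ):ℂ) + ((A*(u:ℤ)^2 : ℤ):ℂ) * v / (3:ℂ) := by
      have hck : ((3:ℂ))^k = (3:ℂ)^(k-1) * 3 := by rw [← pow_succ]; congr 1; omega
      have hpc1 : ((3:ℂ))^(k-1) ≠ 0 := pow_ne_zero _ hpc
      push_cast
      rw [hck]
      field_simp
    rw [split, e_add]
  rw [Finset.sum_congr rfl (fun u hu => Finset.sum_congr rfl (fun v hv => key u hu v hv))]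
  have inner : ∀ u : ℕ,
      ∑ v ∈ Finset.range 9, e (((A * (u:ℤ)^3 : ℤ):ℂ) / ((3^k : ℕ):ℂ)) * e (((A*(u:ℤ)^2 : ℤ):ℂ) * v / (3:ℂ))
        = e (((A * (u:ℤ)^3 : ℤ):ℂ) / ((3^k : ℕ):ℂ)) * (if 3 ∣ u then (9:ℂ) else 0) := by
    intro u
    rw [← Finset.mul_sum]
    have harg : ∀ v : ℕ, ((A*(u:ℤ)^2 : ℤ):ℂ) * v / (3:ℂ) = (((3*(A*(u:ℤ)^2) : ℤ)):ℂ) * v / ((9:ℕ):ℂ) := by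
      intro v
      push_cast
      ring_nf
    simp only [harg]
    rw [sum_e 9 (by norm_num) (3*(A*(u:ℤ)^2))]
    have hcond : (((9:ℕ):ℤ) ∣ 3*(A*(u:ℤ)^2)) ↔ 3 ∣ u := by
      rw [show ((9:ℕ):ℤ) = 3*3 by norm_num,
        mul_dvd_mul_iff_left (by norm_num : (3:ℤ) ≠ 0)]
      exact dvd_A_sq 3 (by norm_num) A hA u
    simp only [hcond]
    norm_num
  rw [Finset.sum_congr rfl (fun u _ => inner u)]
  simp only [mul_ite, mul_zero]
  have hk1 : (3:ℕ)^(k-2) = 3 * 3^(k-3) := by rw [← pow_succ']; congr 1; omega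
  rw [show Finset.range ((3:ℕ)^(k-2)) = Finset.range (3 * 3^(k-3)) by rw [← hk1]]
  rw [sum_filter_dvd' 3 (3^(k-3)) (by norm_num)
    (fun u => e (((A * (u:ℤ)^3 : ℤ):ℂ) / ((3^k : ℕ):ℂ)) * (9:ℂ))]
  have term : ∀ w : ℕ, e (((A * ((3*w : ℕ):ℤ)^3 : ℤ):ℂ) / ((3^k : ℕ):ℂ))
      = e (((A * (w:ℤ)^3 : ℤ):ℂ) / ((3^(k-3) : ℕ):ℂ)) := by
    intro w
    congr 1
    have hck : ((3:ℂ))^k = (3:ℂ)^(k-3) * 3^3 := by rw [← pow_add]; congr 1; omega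
    have hpc1 : ((3:ℂ))^(k-3) ≠ 0 := pow_ne_zero _ hpc
    push_cast
    rw [hck]
    field_simp
  simp only [term]
  rw [← Finset.sum_mul, S_apply]
  push_cast
  ring


lemma rec_all (p : ℕ) (hp : p.Prime) (A : ℤ) (hA : Int.gcd A p = 1) (k : ℕ) (hk : 3 ≤ k) :
    S A (p ^ k) = (p:ℂ)^2 * S A (p ^ (k - 3)) := by
  by_cases h3 : p = 3
  · subst h3
    have hA' : Int.gcd A 3 = 1 := by exact_mod_cast hA
    simpa using rec_three A hA' k hk
  · exact rec_ne_three p hp h3 A hA k hk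

lemma S_one (A : ℤ) : S A 1 = 1 := by
  simp [S]

lemma S_pow (p : ℕ) (hp : p.Prime) (A : ℤ) (hA : Int.gcd A p = 1) :
    ∀ m : ℕ, S A (p^(3*m)) = (p:ℂ)^(2*m) := by
  intro m
  induction m with
  | zero => simp [S_one]
  | succ m ih =>
    have h : 3*(m+1) - 3 = 3*m := by omega
    rw [rec_all p hp A hA (3*(m+1)) (by omega), h, ih,
      show 2*(m+1) = 2*m + 2 by ring, pow_add]
    ring

/- Statement 15 -/
theorem stmt15 (p : ℕ) (hp : p.Prime) (A : ℤ) (hA : Int.gcd A p = 1)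
    (k : ℕ) (hk : 0 < k) (h3 : k % 3 = 0) :
    S A (p ^ k) = (p : ℂ) ^ (2 * k / 3) := by
  obtain ⟨m, hm⟩ : ∃ m, k = 3*m := ⟨k/3, by omega⟩
  subst hm
  rw [show 2*(3*m)/3 = 2*m by omega]
  exact S_pow p hp A hA m

end CubicAppendix
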